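/- For every n ≥ 1 and every function f : {0,1}^n → ℝ, n·dist₂^mono(f)² ≥ 𝔈⁻(f). -/

import Mathlib

open Finset

/-- Flip the `i`-th bit of `x`. -/
def bflip {n : ℕ} (x : Fin n → Bool) (i : Fin n) : Fin n → Bool := Function.update x i (!x i)

/-- Set the `i`-th bit of `x` to `b`. -/
def bset {n : ℕ} (x : Fin n → Bool) (i : Fin n) (b : Bool) : Fin n → Bool := Function.update x i b

/-- Density of `A` under the uniform measure on the hypercube. -/
noncomputable def mu {n : ℕ} (A : Finset (Fin n → Bool)) : ℝ := (A.card : ℝ) / 2 ^ n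

/-- Expectation of `f` under the uniform measure on `A`. -/
noncomputable def expA {n : ℕ} (A : Finset (Fin n → Bool)) (f : (Fin n → Bool) → ℝ) : ℝ :=
  (∑ x ∈ A, f x) / (A.card : ℝ)

/-- Variance of `f` under the uniform measure on `A`. -/
noncomputable def varA {n : ℕ} (A : Finset (Fin n → Bool)) (f : (Fin n → Bool) → ℝ) : ℝ :=
  expA A (fun x => (f x - expA A f) ^ 2)

/-- Covariance of `f` and `g` under the uniform measure on `A`. -/
noncomputable def covA {n : ℕ} (A : Finset (Fin n → Bool)) (f g : (Fin n → Bool) → ℝ) : ℝ :=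
  expA A (fun x => (f x - expA A f) * (g x - expA A g))

/-- Dirichlet form of `f` on the subgraph of the hypercube induced by `A`. -/
noncomputable def dirA {n : ℕ} (A : Finset (Fin n → Bool)) (f : (Fin n → Bool) → ℝ) : ℝ :=
  (1 / 4) * expA A (fun x => ∑ i, (f x - f (bflip x i)) ^ 2 * (if bflip x i ∈ A then (1 : ℝ) else 0))

/-- Expectation of `f` under the uniform measure on the whole hypercube. -/
noncomputable def expC {n : ℕ} (f : (Fin n → Bool) → ℝ) : ℝ := (∑ x, f x) / 2 ^ n

/-- The upward boundary (directed Dirichlet energy) `𝔈⁻(f)`. -/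
noncomputable def energyMinus {n : ℕ} (f : (Fin n → Bool) → ℝ) : ℝ :=
  (1 / 4) * expC (fun x => ∑ i, (min 0 (f (bset x i true) - f (bset x i false))) ^ 2)

/-- The `L²`-distance of `f` to monotone functions on the hypercube. -/
noncomputable def dist2mono {n : ℕ} (f : (Fin n → Bool) → ℝ) : ℝ :=
  ⨅ g : {g : (Fin n → Bool) → ℝ // Monotone g}, Real.sqrt (expC fun x => (f x - g.1 x) ^ 2)

/-- `f` is monotone increasing on the poset `A`. -/
def MonoIncrOn {n : ℕ} (A : Finset (Fin n → Bool)) (f : (Fin n → Bool) → ℝ) : Prop :=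
  ∀ x ∈ A, ∀ y ∈ A, x ≤ y → f x ≤ f y

/-- `f` is non-constant on `A`. -/
def NonconstOn {n : ℕ} (A : Finset (Fin n → Bool)) (f : (Fin n → Bool) → ℝ) : Prop :=
  ∃ x ∈ A, ∃ y ∈ A, f x ≠ f y

/-- The approximate FKG ratio `δ(A)`. -/
noncomputable def fkgRatio {n : ℕ} (A : Finset (Fin n → Bool)) : ℝ :=
  min 0 (sInf {r : ℝ | ∃ f g : (Fin n → Bool) → ℝ, MonoIncrOn A f ∧ MonoIncrOn A g ∧
    NonconstOn A f ∧ NonconstOn A g ∧ r = covA A f g / Real.sqrt (varA A f * varA A g)})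

/-- The extension operator `T`. -/
noncomputable def extT {n : ℕ} (A : Finset (Fin n → Bool)) (hA : A.Nonempty)
    (f : (Fin n → Bool) → ℝ) : (Fin n → Bool) → ℝ :=
  fun x => if x ∈ A then f x else A.inf' hA f

/-- The coordinate component `ℒ^{(i)}` of the directed Laplacian. -/
noncomputable def lapI {n : ℕ} (f : (Fin n → Bool) → ℝ) (i : Fin n) (x : Fin n → Bool) : ℝ :=
  (1 / 2) * (f (bflip x i) - f x) * (if f (bset x i true) < f (bset x i false) then (1 : ℝ) else 0)

/-- The directed Laplacian `ℒ⁻`. -/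
noncomputable def lapMinus {n : ℕ} (f : (Fin n → Bool) → ℝ) (x : Fin n → Bool) : ℝ :=
  ∑ i, lapI f i x

lemma bflip_bflip {n : ℕ} (x : Fin n → Bool) (i : Fin n) : bflip (bflip x i) i = x := by
  simp [bflip, Function.update_idem]

lemma sum_bflip {n : ℕ} (i : Fin n) (h : (Fin n → Bool) → ℝ) :
    ∑ x, h (bflip x i) = ∑ x, h x :=
  Fintype.sum_equiv (Function.Involutive.toPerm _ (fun x => bflip_bflip x i)) _ _ (fun _ => rfl)

lemma pair_eq {n : ℕ} (x : Fin n → Bool) (i : Fin n) (h : (Fin n → Bool) → ℝ) :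
    h (bset x i true) + h (bset x i false) = h x + h (bflip x i) := by
  cases hx : x i
  · have h1 : bset x i false = x := by
      funext j; by_cases hj : j = i <;> simp [bset, Function.update_apply, hj, hx]
    have h2 : bset x i true = bflip x i := by simp [bset, bflip, hx]
    rw [h1, h2]; ring
  · have h1 : bset x i true = x := by
      funext j; by_cases hj : j = i <;> simp [bset, Function.update_apply, hj, hx]
    have h2 : bset x i false = bflip x i := by simp [bset, bflip, hx]
    rw [h1, h2]

lemma pt_bound {n : ℕ} (f g : (Fin n → Bool) → ℝ) (hg : Monotone g) (x : Fin n → Bool)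
    (i : Fin n) :
    (min 0 (f (bset x i true) - f (bset x i false))) ^ 2
      ≤ 2 * ((f (bset x i true) - g (bset x i true)) ^ 2
            + (f (bset x i false) - g (bset x i false)) ^ 2) := by
  have hgle : g (bset x i false) ≤ g (bset x i true) := by
    apply hg
    intro j
    by_cases hj : j = i <;> simp [bset, Function.update_apply, hj]
  set f1 := f (bset x i true)
  set f0 := f (bset x i false)
  set g1 := g (bset x i true)
  set g0 := g (bset x i false)
  rcases le_or_gt f0 f1 with h | h
  · rw [min_eq_left (by linarith)]
    nlinarith [sq_nonneg (f1 - g1), sq_nonneg (f0 - g0)]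
  · rw [min_eq_right (by linarith)]
    nlinarith [sq_nonneg ((f1 - g1) - (g0 - f0)),
      mul_nonneg (sub_nonneg.2 hgle) (by linarith : (0:ℝ) ≤ g1 - f1 + f0 - g0),
      mul_nonneg (sub_nonneg.2 hgle) (by linarith : (0:ℝ) ≤ f0 - f1)]

lemma energy_le {n : ℕ} (f g : (Fin n → Bool) → ℝ) (hg : Monotone g) :
    energyMinus f ≤ n * expC (fun x => (f x - g x) ^ 2) := by
  set h : (Fin n → Bool) → ℝ := fun x => (f x - g x) ^ 2 with hh
  have key : ∀ i : Fin n,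
      ∑ x, (min 0 (f (bset x i true) - f (bset x i false))) ^ 2 ≤ 4 * ∑ x, h x := by
    intro i
    have h1 : ∑ x, (min 0 (f (bset x i true) - f (bset x i false))) ^ 2
        ≤ ∑ x : Fin n → Bool, 2 * (h (bset x i true) + h (bset x i false)) :=
      Finset.sum_le_sum fun x _ => pt_bound f g hg x i
    have h2 : ∑ x : Fin n → Bool, 2 * (h (bset x i true) + h (bset x i false))
        = 4 * ∑ x, h x := by
      rw [Finset.sum_congr rfl (fun x _ => by rw [pair_eq x i h])]
      simp only [mul_add, Finset.sum_add_distrib]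
      rw [← Finset.mul_sum, ← Finset.mul_sum, sum_bflip]
      ring
    linarith
  have main : ∑ x, ∑ i, (min 0 (f (bset x i true) - f (bset x i false))) ^ 2
      ≤ 4 * n * ∑ x, h x := by
    rw [Finset.sum_comm]
    calc ∑ i : Fin n, ∑ x, (min 0 (f (bset x i true) - f (bset x i false))) ^ 2
        ≤ ∑ _i : Fin n, (4 * ∑ x, h x) := Finset.sum_le_sum fun i _ => key i
      _ = 4 * n * ∑ x, h x := by
          rw [Finset.sum_const, Finset.card_univ, Fintype.card_fin, nsmul_eq_mul]; ring
  unfold energyMinus expC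
  have h2n : (0:ℝ) < 2 ^ n := by positivity
  calc (1 / 4) * ((∑ x, ∑ i, (min 0 (f (bset x i true) - f (bset x i false))) ^ 2) / 2 ^ n)
      ≤ (1 / 4) * ((4 * n * ∑ x, h x) / 2 ^ n) := by gcongr
    _ = n * ((∑ x, h x) / 2 ^ n) := by ring

/-- reverse directed Poincaré inequality on the hypercube:
`n·dist₂^mono(f)² ≥ 𝔈⁻(f)`. -/
theorem stmt_19 (n : ℕ) (hn : 1 ≤ n) (f : (Fin n → Bool) → ℝ) :
    (n : ℝ) * dist2mono f ^ 2 ≥ energyMinus f := by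
  have hnpos : (0:ℝ) < n := by exact_mod_cast hn
  have hE : 0 ≤ energyMinus f := by
    unfold energyMinus expC
    positivity
  haveI : Nonempty {g : (Fin n → Bool) → ℝ // Monotone g} := ⟨⟨fun _ => 0, monotone_const⟩⟩
  have hd : Real.sqrt (energyMinus f / n) ≤ dist2mono f := by
    apply le_ciInf
    intro g
    apply Real.sqrt_le_sqrt
    rw [div_le_iff₀ hnpos]
    have := energy_le f g.1 g.2
    linarith
  have hdiv : energyMinus f / n ≤ dist2mono f ^ 2 := by
    calc energyMinus f / n = Real.sqrt (energyMinus f / n) ^ 2 :=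
          (Real.sq_sqrt (div_nonneg hE hnpos.le)).symm
      _ ≤ dist2mono f ^ 2 := pow_le_pow_left₀ (Real.sqrt_nonneg _) hd 2
  rw [ge_iff_le, ← div_le_iff₀' hnpos]
  exact hdiv
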